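/- Let A, B, C be three affinely independent points of the Euclidean plane (EuclideanSpace ℝ (Fin 2)), and let a = dist(B,C), b = dist(C,A), c = dist(A,B), with s, r_A, r_B, r_C, α, β, γ, σ defined from a, b, c as in the context. Set r₁ = r_A·sin²(σ−α), r₂ = r_B·sin²(σ−β), r₃ = r_C·sin²(σ−γ). Then there exist points O₁, O₂, O₃ in the plane such that: the distance from O₁ to the line through A and B equals r₁ and the distance from O₁ to the line through C and A equals r₁; the distance from O₂ to the line through A and B equals r₂ and the distance from O₂ to the line through B and C equals r₂; the distance from O₃ to the line through B and C equals r₃ and the distance from O₃ to the line through C and A equals r₃; and dist(O₁,O₂) = r₁ + r₂, dist(O₁,O₃) = r₁ + r₃, dist(O₂,O₃) = r₂ + r₃ (i.e., the three circles with these centers and radii are the Malfatti circles: each is tangent to two sides of the triangle and the circles are pairwise externally tangent). -/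

import Mathlib

open Real EuclideanGeometry

section MalfattiHelpers

variable {E : Type*} [NormedAddCommGroup E] [InnerProductSpace ℝ E]

private lemma malfatti_sqeq {x y : ℝ} (hx : 0 ≤ x) (hy : 0 ≤ y) (h : x ^ 2 = y ^ 2) : x = y := by
  rw [← Real.sqrt_sq hx, ← Real.sqrt_sq hy, h]

private lemma malfatti_line_infDist (X Y P w : E) (μ : ℝ) (hP : P = X + μ • (Y - X) + w)
    (hw : inner ℝ w (Y - X) = (0 : ℝ)) :
    Metric.infDist P (affineSpan ℝ {X, Y} : Set E) = ‖w‖ := by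
  have hmem : μ • (Y - X) + X ∈ (affineSpan ℝ {X, Y} : Set E) := by
    have := smul_vsub_vadd_mem_affineSpan_pair (k := ℝ) μ X Y
    simpa [vsub_eq_sub, vadd_eq_add] using this
  refine le_antisymm ?_ ?_
  · calc Metric.infDist P (affineSpan ℝ {X, Y} : Set E) ≤ dist P (μ • (Y - X) + X) :=
        Metric.infDist_le_dist_of_mem hmem
      _ = ‖w‖ := by rw [hP, dist_eq_norm]; congr 1; abel
  · refine le_of_not_gt fun hlt => ?_
    have hne : (affineSpan ℝ {X, Y} : Set E).Nonempty :=
      ⟨X, left_mem_affineSpan_pair ℝ X Y⟩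
    obtain ⟨Q, hQ, hd⟩ := (Metric.infDist_lt_iff hne).1 hlt
    obtain ⟨t, ht⟩ : ∃ t : ℝ, t • (Y - X) = Q - X := by
      have h2 := (vadd_left_mem_affineSpan_pair (k := ℝ) (p₁ := X) (p₂ := Y) (v := Q - X))
      refine h2.1 ?_
      simpa [vsub_eq_sub, vadd_eq_add] using hQ
    have hQ' : Q = t • (Y - X) + X := by rw [ht]; abel
    have hPQ : P - Q = w + (μ - t) • (Y - X) := by
      rw [hP, hQ', sub_smul]; abel
    have hsq : ‖P - Q‖ ^ 2 = ‖w‖ ^ 2 + (μ - t) ^ 2 * ‖Y - X‖ ^ 2 := by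
      rw [hPQ, norm_add_sq_real, inner_smul_right, hw, norm_smul, Real.norm_eq_abs, mul_pow,
        sq_abs]
      ring
    have h1 : ‖w‖ ≤ ‖P - Q‖ := by
      nlinarith [norm_nonneg (P - Q), norm_nonneg w, sq_nonneg (μ - t), sq_nonneg ‖Y - X‖]
    rw [dist_eq_norm] at hd
    linarith

private lemma malfatti_line_infDist' (X Y Z P : E) {dY dZ ip k ρ : ℝ}
    (hY : ‖Y - X‖ ^ 2 = dY) (hZ : ‖Z - X‖ ^ 2 = dZ)
    (hip : inner ℝ (Z - X) (Y - X) = ip) (hdY : dY ≠ 0)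
    (hρ : 0 ≤ ρ) (hρ2 : ρ ^ 2 * dY = k ^ 2 * (dZ * dY - ip ^ 2))
    (hP : ∃ u : ℝ, P = X + u • (Y - X) + k • (Z - X)) :
    Metric.infDist P (affineSpan ℝ {X, Y} : Set E) = ρ := by
  obtain ⟨u, hu⟩ := hP
  set w : E := k • ((Z - X) - (ip / dY) • (Y - X)) with hwdef
  have hP' : P = X + (u + k * (ip / dY)) • (Y - X) + w := by
    rw [hu, hwdef]; module
  have hYY : inner ℝ (Y - X) (Y - X) = (dY : ℝ) := by
    rw [real_inner_self_eq_norm_sq, hY]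
  have hw : inner ℝ w (Y - X) = (0 : ℝ) := by
    rw [hwdef, real_inner_smul_left, inner_sub_left, real_inner_smul_left, hip, hYY]
    field_simp
    ring
  have hnw : ‖w‖ = ρ := by
    refine malfatti_sqeq (norm_nonneg w) hρ ?_
    have hw2 : ‖w‖ ^ 2 = k ^ 2 * (dZ - 2 * (ip / dY) * ip + (ip / dY) ^ 2 * dY) := by
      rw [hwdef, norm_smul, Real.norm_eq_abs, mul_pow, sq_abs, norm_sub_sq_real,
        real_inner_smul_right, hip, norm_smul, Real.norm_eq_abs, mul_pow, sq_abs, hY, hZ]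
      ring
    have hkey : dZ - 2 * (ip / dY) * ip + (ip / dY) ^ 2 * dY = (dZ * dY - ip ^ 2) / dY := by
      field_simp
      ring
    rw [hw2, hkey, mul_div_assoc', eq_comm, eq_div_iff hdY]
    linear_combination hρ2
  rw [malfatti_line_infDist X Y P w _ hP' hw, hnw]

private lemma malfatti_norm_comb_sq (e₁ e₂ : E) (X Y d₁ d₂ ip : ℝ)
    (h1 : ‖e₁‖ ^ 2 = d₁) (h2 : ‖e₂‖ ^ 2 = d₂) (hip : inner ℝ e₁ e₂ = ip) :
    ‖X • e₁ + Y • e₂‖ ^ 2 = X ^ 2 * d₁ + 2 * X * Y * ip + Y ^ 2 * d₂ := by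
  rw [norm_add_sq_real, real_inner_smul_left, real_inner_smul_right, hip, norm_smul, norm_smul,
    Real.norm_eq_abs, Real.norm_eq_abs, mul_pow, mul_pow, sq_abs, sq_abs, h1, h2]
  ring

private lemma malfatti_trig_id (x y : ℝ) : Real.sin (x + y) ^ 2 =
    Real.sin x ^ 2 + Real.sin y ^ 2 + 2 * Real.sin x * Real.sin y * Real.cos (x + y) := by
  rw [Real.sin_add, Real.cos_add]
  linear_combination Real.sin x ^ 2 * Real.sin_sq_add_cos_sq y +
    Real.sin y ^ 2 * Real.sin_sq_add_cos_sq x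

private lemma malfatti_angle_lt {α β γ : ℝ} (hα : α ∈ Set.Ioo 0 (π / 2))
    (hβ : β ∈ Set.Ioo 0 (π / 2)) (hγ : γ ∈ Set.Ioo 0 (π / 2))
    (hsum : Real.sin α ^ 2 + Real.sin β ^ 2 + Real.sin γ ^ 2 = 2) : α < β + γ := by
  by_contra h
  push_neg at h
  have hπ : (0:ℝ) < π / 2 := by positivity
  have h1 : Real.sin (β + γ) ≤ Real.sin α := by
    refine Real.strictMonoOn_sin.monotoneOn ⟨?_, ?_⟩ ⟨?_, ?_⟩ h
    · linarith [hβ.1, hγ.1]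
    · linarith [hα.2]
    · linarith [hα.1]
    · linarith [hα.2]
  have hsβ : 0 < Real.sin β := Real.sin_pos_of_pos_of_lt_pi hβ.1 (by linarith [hβ.2, Real.pi_pos])
  have hsγ : 0 < Real.sin γ := Real.sin_pos_of_pos_of_lt_pi hγ.1 (by linarith [hγ.2, Real.pi_pos])
  have hcβγ : 0 < Real.cos (β + γ) := by
    apply Real.cos_pos_of_mem_Ioo
    constructor
    · linarith [hβ.1, hγ.1]
    · linarith [hα.2]
  have h2 := malfatti_trig_id β γ
  have h3 : 0 ≤ Real.sin (β + γ) :=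
    Real.sin_nonneg_of_nonneg_of_le_pi (by linarith [hβ.1, hγ.1])
      (by linarith [hα.2, Real.pi_pos])
  have h4 : Real.sin α ≤ 1 := Real.sin_le_one α
  have h5 : 0 ≤ Real.sin α := le_trans h3 h1
  nlinarith [mul_le_mul h1 h1 h3 h5, mul_pos (mul_pos hsβ hsγ) hcβγ,
    mul_le_mul h4 h4 h5 zero_le_one]

end MalfattiHelpers

set_option maxHeartbeats 2000000 in
theorem malfatti_circles_exist
    (A B C : EuclideanSpace ℝ (Fin 2))
    (hABC : AffineIndependent ℝ ![A, B, C])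
    (a b c : ℝ) (ha : a = dist B C) (hb : b = dist C A) (hc : c = dist A B)
    (s rA rB rC α β γ σ r₁ r₂ r₃ : ℝ)
    (hs : s = (a + b + c) / 2)
    (hrA : rA = Real.sqrt (s * (s - b) * (s - c) / (s - a)))
    (hrB : rB = Real.sqrt (s * (s - c) * (s - a) / (s - b)))
    (hrC : rC = Real.sqrt (s * (s - a) * (s - b) / (s - c)))
    (hα : α ∈ Set.Ioo 0 (π / 2)) (hβ : β ∈ Set.Ioo 0 (π / 2)) (hγ : γ ∈ Set.Ioo 0 (π / 2))
    (hsinα : Real.sin α ^ 2 = a / s)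
    (hsinβ : Real.sin β ^ 2 = b / s)
    (hsinγ : Real.sin γ ^ 2 = c / s)
    (hσ : σ = (α + β + γ) / 2)
    (hr₁ : r₁ = rA * Real.sin (σ - α) ^ 2)
    (hr₂ : r₂ = rB * Real.sin (σ - β) ^ 2)
    (hr₃ : r₃ = rC * Real.sin (σ - γ) ^ 2) :
    ∃ O₁ O₂ O₃ : EuclideanSpace ℝ (Fin 2),
      Metric.infDist O₁ (affineSpan ℝ {A, B} : Set (EuclideanSpace ℝ (Fin 2))) = r₁ ∧
      Metric.infDist O₁ (affineSpan ℝ {C, A} : Set (EuclideanSpace ℝ (Fin 2))) = r₁ ∧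
      Metric.infDist O₂ (affineSpan ℝ {A, B} : Set (EuclideanSpace ℝ (Fin 2))) = r₂ ∧
      Metric.infDist O₂ (affineSpan ℝ {B, C} : Set (EuclideanSpace ℝ (Fin 2))) = r₂ ∧
      Metric.infDist O₃ (affineSpan ℝ {B, C} : Set (EuclideanSpace ℝ (Fin 2))) = r₃ ∧
      Metric.infDist O₃ (affineSpan ℝ {C, A} : Set (EuclideanSpace ℝ (Fin 2))) = r₃ ∧
      dist O₁ O₂ = r₁ + r₂ ∧ dist O₁ O₃ = r₁ + r₃ ∧ dist O₂ O₃ = r₂ + r₃ := by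
  classical
  -- noncollinearity and nondegeneracy
  have hncol : ¬ Collinear ℝ ({A, B, C} : Set (EuclideanSpace ℝ (Fin 2))) :=
    affineIndependent_iff_not_collinear_set.mp hABC
  have hABne : A ≠ B := by
    rintro rfl
    exact hncol (by simpa using collinear_pair ℝ A C)
  have hBCne : B ≠ C := by
    rintro rfl
    exact hncol (by simpa using collinear_pair ℝ A B)
  have hACne : A ≠ C := by
    rintro rfl
    exact hncol (by
      have : ({A, B, A} : Set (EuclideanSpace ℝ (Fin 2))) = {A, B} := by
        ext x; simp; tauto
      rw [this]; exact collinear_pair ℝ A B)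
  have ha0 : 0 < a := by rw [ha]; exact dist_pos.mpr hBCne
  have hb0 : 0 < b := by rw [hb]; exact dist_pos.mpr (Ne.symm hACne)
  have hc0 : 0 < c := by rw [hc]; exact dist_pos.mpr hABne
  -- strict triangle inequalities
  have htri_a : a < b + c := by
    have h1 : dist B C ≤ dist B A + dist A C := dist_triangle _ _ _
    have h2 : dist B A + dist A C ≠ dist B C := by
      intro h
      have hw := (dist_add_dist_eq_iff.mp h).collinear
      rw [Set.insert_comm] at hw
      exact hncol hw
    have h3 : dist B C < dist B A + dist A C := lt_of_le_of_ne h1 (fun h => h2 h.symm)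
    have e1 : dist B A = dist A B := dist_comm B A
    have e2 : dist A C = dist C A := dist_comm A C
    rw [ha, hb, hc]; linarith
  have htri_b : b < a + c := by
    have h1 : dist C A ≤ dist C B + dist B A := dist_triangle _ _ _
    have h2 : dist C B + dist B A ≠ dist C A := by
      intro h
      have hw := (dist_add_dist_eq_iff.mp h).collinear
      have hset : ({C, B, A} : Set (EuclideanSpace ℝ (Fin 2))) = {A, B, C} := by
        ext x; simp; tauto
      rw [hset] at hw
      exact hncol hw
    have h3 : dist C A < dist C B + dist B A := lt_of_le_of_ne h1 (fun h => h2 h.symm)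
    have e1 : dist C B = dist B C := dist_comm C B
    have e2 : dist B A = dist A B := dist_comm B A
    rw [ha, hb, hc]; linarith
  have htri_c : c < a + b := by
    have h1 : dist A B ≤ dist A C + dist C B := dist_triangle _ _ _
    have h2 : dist A C + dist C B ≠ dist A B := by
      intro h
      have hw := (dist_add_dist_eq_iff.mp h).collinear
      have hset : ({A, C, B} : Set (EuclideanSpace ℝ (Fin 2))) = {A, B, C} := by
        ext x; simp; tauto
      rw [hset] at hw
      exact hncol hw
    have h3 : dist A B < dist A C + dist C B := lt_of_le_of_ne h1 (fun h => h2 h.symm)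
    have e1 : dist A C = dist C A := dist_comm A C
    have e2 : dist C B = dist B C := dist_comm C B
    rw [ha, hb, hc]; linarith
  have h2s : a + b + c = 2 * s := by rw [hs]; ring
  have hu0 : 0 < s - a := by rw [hs]; linarith
  have hv0 : 0 < s - b := by rw [hs]; linarith
  have hw0 : 0 < s - c := by rw [hs]; linarith
  have hs0 : 0 < s := by rw [hs]; linarith
  -- the inradius
  set r : ℝ := Real.sqrt ((s - a) * (s - b) * (s - c) / s) with hrdef
  have hr0 : 0 < r := Real.sqrt_pos.mpr (by positivity)
  have hr2 : r ^ 2 * s = (s - a) * (s - b) * (s - c) := by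
    rw [hrdef, Real.sq_sqrt (by positivity)]
    field_simp
  -- exradius identities
  have hrA2 : rA ^ 2 = s * (s - b) * (s - c) / (s - a) := by
    rw [hrA, Real.sq_sqrt (by positivity)]
  have hrB2 : rB ^ 2 = s * (s - c) * (s - a) / (s - b) := by
    rw [hrB, Real.sq_sqrt (by positivity)]
  have hrC2 : rC ^ 2 = s * (s - a) * (s - b) / (s - c) := by
    rw [hrC, Real.sq_sqrt (by positivity)]
  have hrA0 : 0 ≤ rA := hrA ▸ Real.sqrt_nonneg _
  have hrB0 : 0 ≤ rB := hrB ▸ Real.sqrt_nonneg _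
  have hrC0 : 0 ≤ rC := hrC ▸ Real.sqrt_nonneg _
  have hrAu : rA * (s - a) = r * s := by
    refine malfatti_sqeq (by positivity) (by positivity) ?_
    have e1 : rA ^ 2 * (s - a) ^ 2 = s * (s - b) * (s - c) * (s - a) := by
      rw [hrA2]; field_simp [hu0.ne']
    rw [mul_pow, mul_pow, e1]
    linear_combination (-s) * hr2
  have hrBv : rB * (s - b) = r * s := by
    refine malfatti_sqeq (by positivity) (by positivity) ?_
    have e1 : rB ^ 2 * (s - b) ^ 2 = s * (s - c) * (s - a) * (s - b) := by
      rw [hrB2]; field_simp [hv0.ne']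
    rw [mul_pow, mul_pow, e1]
    linear_combination (-s) * hr2
  have hrCw : rC * (s - c) = r * s := by
    refine malfatti_sqeq (by positivity) (by positivity) ?_
    have e1 : rC ^ 2 * (s - c) ^ 2 = s * (s - a) * (s - b) * (s - c) := by
      rw [hrC2]; field_simp [hw0.ne']
    rw [mul_pow, mul_pow, e1]
    linear_combination (-s) * hr2
  have hrAB : rA * rB = s * (s - c) := by
    refine malfatti_sqeq (by positivity) (by positivity) ?_
    rw [mul_pow, hrA2, hrB2]
    field_simp [hu0.ne', hv0.ne']
  have hrBC : rB * rC = s * (s - a) := by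
    refine malfatti_sqeq (by positivity) (by positivity) ?_
    rw [mul_pow, hrB2, hrC2]
    field_simp [hv0.ne', hw0.ne']
  have hrAC : rA * rC = s * (s - b) := by
    refine malfatti_sqeq (by positivity) (by positivity) ?_
    rw [mul_pow, hrA2, hrC2]
    field_simp [hu0.ne', hw0.ne']
  -- the angles
  have hsum2 : Real.sin α ^ 2 + Real.sin β ^ 2 + Real.sin γ ^ 2 = 2 := by
    rw [hsinα, hsinβ, hsinγ]
    field_simp
    linarith
  have hαlt := malfatti_angle_lt hα hβ hγ hsum2
  have hβlt := malfatti_angle_lt hβ hγ hα (by linarith)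
  have hγlt := malfatti_angle_lt hγ hα hβ (by linarith)
  have hsin1 : 0 < Real.sin (σ - α) := by
    apply Real.sin_pos_of_pos_of_lt_pi
    · rw [hσ]; linarith
    · rw [hσ]; have := hβ.2; have := hγ.2; have := hα.1; linarith [Real.pi_pos]
  have hsin2 : 0 < Real.sin (σ - β) := by
    apply Real.sin_pos_of_pos_of_lt_pi
    · rw [hσ]; linarith
    · rw [hσ]; have := hα.2; have := hγ.2; have := hβ.1; linarith [Real.pi_pos]
  have hsin3 : 0 < Real.sin (σ - γ) := by
    apply Real.sin_pos_of_pos_of_lt_pi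
    · rw [hσ]; linarith
    · rw [hσ]; have := hα.2; have := hβ.2; have := hγ.1; linarith [Real.pi_pos]
  have hr₁0 : 0 ≤ r₁ := by rw [hr₁]; exact mul_nonneg hrA0 (sq_nonneg _)
  have hr₂0 : 0 ≤ r₂ := by rw [hr₂]; exact mul_nonneg hrB0 (sq_nonneg _)
  have hr₃0 : 0 ≤ r₃ := by rw [hr₃]; exact mul_nonneg hrC0 (sq_nonneg _)
  have hr1u : r₁ * (s - a) = r * s * Real.sin (σ - α) ^ 2 := by
    rw [hr₁]; linear_combination Real.sin (σ - α) ^ 2 * hrAu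
  have hr2v : r₂ * (s - b) = r * s * Real.sin (σ - β) ^ 2 := by
    rw [hr₂]; linear_combination Real.sin (σ - β) ^ 2 * hrBv
  have hr3w : r₃ * (s - c) = r * s * Real.sin (σ - γ) ^ 2 := by
    rw [hr₃]; linear_combination Real.sin (σ - γ) ^ 2 * hrCw
  -- cosine values
  have hcα0 : 0 ≤ Real.cos α := Real.cos_nonneg_of_mem_Icc
    ⟨by linarith [hα.1, Real.pi_pos], le_of_lt hα.2⟩
  have hcβ0 : 0 ≤ Real.cos β := Real.cos_nonneg_of_mem_Icc
    ⟨by linarith [hβ.1, Real.pi_pos], le_of_lt hβ.2⟩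
  have hcγ0 : 0 ≤ Real.cos γ := Real.cos_nonneg_of_mem_Icc
    ⟨by linarith [hγ.1, Real.pi_pos], le_of_lt hγ.2⟩
  have hsqa : Real.sqrt (s * (s - a)) = s * Real.cos α := by
    refine malfatti_sqeq (Real.sqrt_nonneg _) (by positivity) ?_
    rw [Real.sq_sqrt (by positivity), mul_pow]
    have hcos2 : Real.cos α ^ 2 = 1 - Real.sin α ^ 2 := by
      linear_combination Real.sin_sq_add_cos_sq α
    rw [hcos2, hsinα]
    field_simp
  have hsqb : Real.sqrt (s * (s - b)) = s * Real.cos β := by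
    refine malfatti_sqeq (Real.sqrt_nonneg _) (by positivity) ?_
    rw [Real.sq_sqrt (by positivity), mul_pow]
    have hcos2 : Real.cos β ^ 2 = 1 - Real.sin β ^ 2 := by
      linear_combination Real.sin_sq_add_cos_sq β
    rw [hcos2, hsinβ]
    field_simp
  have hsqc : Real.sqrt (s * (s - c)) = s * Real.cos γ := by
    refine malfatti_sqeq (Real.sqrt_nonneg _) (by positivity) ?_
    rw [Real.sq_sqrt (by positivity), mul_pow]
    have hcos2 : Real.cos γ ^ 2 = 1 - Real.sin γ ^ 2 := by
      linear_combination Real.sin_sq_add_cos_sq γ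
    rw [hcos2, hsinγ]
    field_simp
  -- square roots of products of radii
  have hK12sq : Real.sqrt (r₁ * r₂) ^ 2 = r₁ * r₂ := Real.sq_sqrt (by positivity)
  have hK13sq : Real.sqrt (r₁ * r₃) ^ 2 = r₁ * r₃ := Real.sq_sqrt (by positivity)
  have hK23sq : Real.sqrt (r₂ * r₃) ^ 2 = r₂ * r₃ := Real.sq_sqrt (by positivity)
  have hK12 : Real.sqrt (r₁ * r₂) = s * Real.cos γ * (Real.sin (σ - α) * Real.sin (σ - β)) := by
    have h1 : r₁ * r₂ = (s * (s - c)) * (Real.sin (σ - α) * Real.sin (σ - β)) ^ 2 := by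
      rw [hr₁, hr₂]
      linear_combination (Real.sin (σ - α) ^ 2 * Real.sin (σ - β) ^ 2) * hrAB
    rw [h1, Real.sqrt_mul (by positivity), Real.sqrt_sq (by positivity), hsqc]
  have hK13 : Real.sqrt (r₁ * r₃) = s * Real.cos β * (Real.sin (σ - α) * Real.sin (σ - γ)) := by
    have h1 : r₁ * r₃ = (s * (s - b)) * (Real.sin (σ - α) * Real.sin (σ - γ)) ^ 2 := by
      rw [hr₁, hr₃]
      linear_combination (Real.sin (σ - α) ^ 2 * Real.sin (σ - γ) ^ 2) * hrAC
    rw [h1, Real.sqrt_mul (by positivity), Real.sqrt_sq (by positivity), hsqb]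
  have hK23 : Real.sqrt (r₂ * r₃) = s * Real.cos α * (Real.sin (σ - β) * Real.sin (σ - γ)) := by
    have h1 : r₂ * r₃ = (s * (s - a)) * (Real.sin (σ - β) * Real.sin (σ - γ)) ^ 2 := by
      rw [hr₂, hr₃]
      linear_combination (Real.sin (σ - β) ^ 2 * Real.sin (σ - γ) ^ 2) * hrBC
    rw [h1, Real.sqrt_mul (by positivity), Real.sqrt_sq (by positivity), hsqa]
  -- tangency identities
  have htan12 : c * r = r₁ * (s - a) + r₂ * (s - b) + 2 * r * Real.sqrt (r₁ * r₂) := by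
    have hγeq : γ = (σ - α) + (σ - β) := by rw [hσ]; ring
    have htr := malfatti_trig_id (σ - α) (σ - β)
    rw [← hγeq] at htr
    have hcval : c = s * Real.sin γ ^ 2 := by rw [hsinγ]; field_simp
    linear_combination r * hcval + r * s * htr - hr1u - hr2v - (2 * r) * hK12
  have htan13 : b * r = r₁ * (s - a) + r₃ * (s - c) + 2 * r * Real.sqrt (r₁ * r₃) := by
    have hβeq : β = (σ - α) + (σ - γ) := by rw [hσ]; ring
    have htr := malfatti_trig_id (σ - α) (σ - γ)
    rw [← hβeq] at htr
    have hcval : b = s * Real.sin β ^ 2 := by rw [hsinβ]; field_simp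
    linear_combination r * hcval + r * s * htr - hr1u - hr3w - (2 * r) * hK13
  have htan23 : a * r = r₂ * (s - b) + r₃ * (s - c) + 2 * r * Real.sqrt (r₂ * r₃) := by
    have hαeq : α = (σ - β) + (σ - γ) := by rw [hσ]; ring
    have htr := malfatti_trig_id (σ - β) (σ - γ)
    rw [← hαeq] at htr
    have hcval : a = s * Real.sin α ^ 2 := by rw [hsinα]; field_simp
    linear_combination r * hcval + r * s * htr - hr2v - hr3w - (2 * r) * hK23
  -- Gram matrix facts
  have hnBA : ‖B - A‖ ^ 2 = c ^ 2 := by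
    rw [← dist_eq_norm B A, dist_comm B A, ← hc]
  have hnAB : ‖A - B‖ ^ 2 = c ^ 2 := by rw [← dist_eq_norm A B, ← hc]
  have hnCA : ‖C - A‖ ^ 2 = b ^ 2 := by rw [← dist_eq_norm C A, ← hb]
  have hnAC : ‖A - C‖ ^ 2 = b ^ 2 := by rw [← dist_eq_norm A C, dist_comm A C, ← hb]
  have hnCB : ‖C - B‖ ^ 2 = a ^ 2 := by rw [← dist_eq_norm C B, dist_comm C B, ← ha]
  have hnBC : ‖B - C‖ ^ 2 = a ^ 2 := by rw [← dist_eq_norm B C, ← ha]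
  have ipA : inner ℝ (C - A) (B - A) = ((b ^ 2 + c ^ 2 - a ^ 2) / 2 : ℝ) := by
    have h := norm_sub_sq_real (C - A) (B - A)
    rw [show (C - A) - (B - A) = C - B from by abel, hnCB, hnCA, hnBA] at h
    linarith
  have ipA' : inner ℝ (B - A) (C - A) = ((b ^ 2 + c ^ 2 - a ^ 2) / 2 : ℝ) := by
    rw [real_inner_comm]; exact ipA
  have ipB : inner ℝ (C - B) (A - B) = ((a ^ 2 + c ^ 2 - b ^ 2) / 2 : ℝ) := by
    have h := norm_sub_sq_real (C - B) (A - B)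
    rw [show (C - B) - (A - B) = C - A from by abel, hnCA, hnCB, hnAB] at h
    linarith
  have ipB' : inner ℝ (A - B) (C - B) = ((a ^ 2 + c ^ 2 - b ^ 2) / 2 : ℝ) := by
    rw [real_inner_comm]; exact ipB
  have ipC : inner ℝ (A - C) (B - C) = ((a ^ 2 + b ^ 2 - c ^ 2) / 2 : ℝ) := by
    have h := norm_sub_sq_real (A - C) (B - C)
    rw [show (A - C) - (B - C) = A - B from by abel, hnAB, hnAC, hnBC] at h
    linarith
  have ipC' : inner ℝ (B - C) (A - C) = ((a ^ 2 + b ^ 2 - c ^ 2) / 2 : ℝ) := by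
    rw [real_inner_comm]; exact ipC
  -- Heron-type identities
  have hHA : b ^ 2 * c ^ 2 - ((b ^ 2 + c ^ 2 - a ^ 2) / 2) ^ 2 = (2 * s * r) ^ 2 := by
    linear_combination (-4*s) * hr2 + (2*s^3 - c*s^2 + (-1/2)*c^2*s + (-1/4)*c^3 - b*s^2 + b*c*s
      + (1/4)*b*c^2 + (-1/2)*b^2*s + (1/4)*b^2*c + (-1/4)*b^3 - a*s^2 + a*c*s + (1/4)*a*c^2
      + a*b*s + (-1/2)*a*b*c + (1/4)*a*b^2 + (-1/2)*a^2*s + (1/4)*a^2*c + (1/4)*a^2*b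
      + (-1/4)*a^3) * h2s
  have hHB : a ^ 2 * c ^ 2 - ((a ^ 2 + c ^ 2 - b ^ 2) / 2) ^ 2 = (2 * s * r) ^ 2 := by
    linear_combination (-4*s) * hr2 + (2*s^3 - c*s^2 + (-1/2)*c^2*s + (-1/4)*c^3 - b*s^2 + b*c*s
      + (1/4)*b*c^2 + (-1/2)*b^2*s + (1/4)*b^2*c + (-1/4)*b^3 - a*s^2 + a*c*s + (1/4)*a*c^2
      + a*b*s + (-1/2)*a*b*c + (1/4)*a*b^2 + (-1/2)*a^2*s + (1/4)*a^2*c + (1/4)*a^2*b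
      + (-1/4)*a^3) * h2s
  have hHC : a ^ 2 * b ^ 2 - ((a ^ 2 + b ^ 2 - c ^ 2) / 2) ^ 2 = (2 * s * r) ^ 2 := by
    linear_combination (-4*s) * hr2 + (2*s^3 - c*s^2 + (-1/2)*c^2*s + (-1/4)*c^3 - b*s^2 + b*c*s
      + (1/4)*b*c^2 + (-1/2)*b^2*s + (1/4)*b^2*c + (-1/4)*b^3 - a*s^2 + a*c*s + (1/4)*a*c^2
      + a*b*s + (-1/2)*a*b*c + (1/4)*a*b^2 + (-1/2)*a^2*s + (1/4)*a^2*c + (1/4)*a^2*b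
      + (-1/4)*a^3) * h2s
  have hsr0 : (0:ℝ) < 2 * s * r := by positivity
  -- the circle centers
  set O₁ : EuclideanSpace ℝ (Fin 2) := A + (r₁ / (2 * s * r)) • (b • (B - A) + c • (C - A))
    with hO₁
  set O₂ : EuclideanSpace ℝ (Fin 2) := B + (r₂ / (2 * s * r)) • (a • (A - B) + c • (C - B))
    with hO₂
  set O₃ : EuclideanSpace ℝ (Fin 2) := C + (r₃ / (2 * s * r)) • (a • (A - C) + b • (B - C))
    with hO₃
  refine ⟨O₁, O₂, O₃, ?_, ?_, ?_, ?_, ?_, ?_, ?_, ?_, ?_⟩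
  · -- O₁ to line AB
    refine malfatti_line_infDist' A B C O₁ (k := r₁ * c / (2 * s * r)) hnBA hnCA ipA
      (pow_pos hc0 2).ne' hr₁0 ?_ ⟨r₁ * b / (2 * s * r), ?_⟩
    · rw [show b ^ 2 * c ^ 2 - ((b ^ 2 + c ^ 2 - a ^ 2) / 2) ^ 2 = (2 * s * r) ^ 2 from hHA]
      field_simp
    · rw [hO₁]
      match_scalars <;> field_simp <;> ring
  · -- O₁ to line CA
    rw [Set.pair_comm C A]
    refine malfatti_line_infDist' A C B O₁ (k := r₁ * b / (2 * s * r)) hnCA hnBA ipA'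
      (pow_pos hb0 2).ne' hr₁0 ?_ ⟨r₁ * c / (2 * s * r), ?_⟩
    · rw [show c ^ 2 * b ^ 2 - ((b ^ 2 + c ^ 2 - a ^ 2) / 2) ^ 2 = (2 * s * r) ^ 2 from by
        linear_combination hHA]
      field_simp
    · rw [hO₁]
      match_scalars <;> field_simp <;> ring
  · -- O₂ to line AB
    rw [Set.pair_comm A B]
    refine malfatti_line_infDist' B A C O₂ (k := r₂ * c / (2 * s * r)) hnAB hnCB ipB
      (pow_pos hc0 2).ne' hr₂0 ?_ ⟨r₂ * a / (2 * s * r), ?_⟩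
    · rw [show a ^ 2 * c ^ 2 - ((a ^ 2 + c ^ 2 - b ^ 2) / 2) ^ 2 = (2 * s * r) ^ 2 from hHB]
      field_simp
    · rw [hO₂]
      match_scalars <;> field_simp <;> ring
  · -- O₂ to line BC
    refine malfatti_line_infDist' B C A O₂ (k := r₂ * a / (2 * s * r)) hnCB hnAB ipB'
      (pow_pos ha0 2).ne' hr₂0 ?_ ⟨r₂ * c / (2 * s * r), ?_⟩
    · rw [show c ^ 2 * a ^ 2 - ((a ^ 2 + c ^ 2 - b ^ 2) / 2) ^ 2 = (2 * s * r) ^ 2 from by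
        linear_combination hHB]
      field_simp
    · rw [hO₂]
      match_scalars <;> field_simp <;> ring
  · -- O₃ to line BC
    rw [Set.pair_comm B C]
    refine malfatti_line_infDist' C B A O₃ (k := r₃ * a / (2 * s * r)) hnBC hnAC ipC
      (pow_pos ha0 2).ne' hr₃0 ?_ ⟨r₃ * b / (2 * s * r), ?_⟩
    · rw [show b ^ 2 * a ^ 2 - ((a ^ 2 + b ^ 2 - c ^ 2) / 2) ^ 2 = (2 * s * r) ^ 2 from by
        linear_combination hHC]
      field_simp
    · rw [hO₃]
      match_scalars <;> field_simp <;> ring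
  · -- O₃ to line CA
    refine malfatti_line_infDist' C A B O₃ (k := r₃ * b / (2 * s * r)) hnAC hnBC ipC'
      (pow_pos hb0 2).ne' hr₃0 ?_ ⟨r₃ * a / (2 * s * r), ?_⟩
    · rw [show a ^ 2 * b ^ 2 - ((a ^ 2 + b ^ 2 - c ^ 2) / 2) ^ 2 = (2 * s * r) ^ 2 from hHC]
      field_simp
    · rw [hO₃]
      match_scalars <;> field_simp <;> ring
  · -- dist O₁ O₂
    have hv : (2 * s * r) • (O₁ - O₂) =
        (-(2 * s * r) + r₁ * b + r₂ * (a + c)) • (B - A) + ((r₁ - r₂) * c) • (C - A) := by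
      rw [hO₁, hO₂]
      match_scalars <;> field_simp <;> ring
    have hnv := malfatti_norm_comb_sq (B - A) (C - A) (-(2 * s * r) + r₁ * b + r₂ * (a + c)) ((r₁ - r₂) * c)
      (c ^ 2) (b ^ 2) ((b ^ 2 + c ^ 2 - a ^ 2) / 2) hnBA hnCA ipA'
    have hsq : ‖O₁ - O₂‖ ^ 2 = (r₁ + r₂) ^ 2 := by
      have hkk : (2 * s * r) ^ 2 * ‖O₁ - O₂‖ ^ 2 = ‖(2 * s * r) • (O₁ - O₂)‖ ^ 2 := by
        simp only [norm_smul, mul_pow, Real.norm_eq_abs, sq_abs]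
      have h2 : (2 * s * r) ^ 2 * ‖O₁ - O₂‖ ^ 2 = (2 * s * r) ^ 2 * (r₁ + r₂) ^ 2 := by
        rw [hkk, hv, hnv]
        linear_combination (4*s^2*(c*r - r₁*(s-a) - r₂*(s-b) + 2*r*Real.sqrt (r₁*r₂))) * htan12
          + (16*s^2*r^2) * hK12sq + (-4*s*(r₁-r₂)^2) * hr2
          + (4*s^3*r₂^2 + 4*s^3*r₁^2 + 4*c*s^2*r₁*r₂ - 4*c*s^2*r*r₂ - 4*c*s^2*r*r₁
            + 2*c^2*s*r₁*r₂ - 2*c^2*s*r*r₂ - 2*c^2*s*r*r₁ + c^3*r₁*r₂ - 4*b*s^2*r₂^2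
            - 2*b*c*s*r₁*r₂ + 2*b*c*s*r₁^2 + 2*b*c*s*r*r₂ - 2*b*c*s*r*r₁ + b*c^2*r₁^2
            - b^2*c*r₁*r₂ + b^2*c*r₁^2 - 4*a*s^2*r₁^2 + 2*a*c*s*r₂^2 - 2*a*c*s*r₁*r₂
            - 2*a*c*s*r*r₂ + 2*a*c*s*r*r₁ + a*c^2*r₂^2 - a*b*c*r₂^2 + 2*a*b*c*r₁*r₂
            - a*b*c*r₁^2 + a^2*c*r₂^2 - a^2*c*r₁*r₂) * h2s
      exact mul_left_cancel₀ (by positivity) h2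
    rw [dist_eq_norm]
    exact malfatti_sqeq (norm_nonneg _) (by linarith) hsq
  · -- dist O₁ O₃
    have hv : (2 * s * r) • (O₁ - O₃) =
        ((r₁ - r₃) * b) • (B - A) + (-(2 * s * r) + r₁ * c + r₃ * (a + b)) • (C - A) := by
      rw [hO₁, hO₃]
      match_scalars <;> field_simp <;> ring
    have hnv := malfatti_norm_comb_sq (B - A) (C - A) ((r₁ - r₃) * b) (-(2 * s * r) + r₁ * c + r₃ * (a + b))
      (c ^ 2) (b ^ 2) ((b ^ 2 + c ^ 2 - a ^ 2) / 2) hnBA hnCA ipA'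
    have hsq : ‖O₁ - O₃‖ ^ 2 = (r₁ + r₃) ^ 2 := by
      have hkk : (2 * s * r) ^ 2 * ‖O₁ - O₃‖ ^ 2 = ‖(2 * s * r) • (O₁ - O₃)‖ ^ 2 := by
        simp only [norm_smul, mul_pow, Real.norm_eq_abs, sq_abs]
      have h2 : (2 * s * r) ^ 2 * ‖O₁ - O₃‖ ^ 2 = (2 * s * r) ^ 2 * (r₁ + r₃) ^ 2 := by
        rw [hkk, hv, hnv]
        linear_combination (4*s^2*(b*r - r₁*(s-a) - r₃*(s-c) + 2*r*Real.sqrt (r₁*r₃))) * htan13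
          + (16*s^2*r^2) * hK13sq + (-4*s*(r₁-r₃)^2) * hr2
          + (4*s^3*r₃^2 + 4*s^3*r₁^2 - 4*c*s^2*r₃^2 + 4*b*s^2*r₁*r₃ - 4*b*s^2*r*r₃
            - 4*b*s^2*r*r₁ - 2*b*c*s*r₁*r₃ + 2*b*c*s*r₁^2 + 2*b*c*s*r*r₃ - 2*b*c*s*r*r₁
            - b*c^2*r₁*r₃ + b*c^2*r₁^2 + 2*b^2*s*r₁*r₃ - 2*b^2*s*r*r₃ - 2*b^2*s*r*r₁
            + b^2*c*r₁^2 + b^3*r₁*r₃ - 4*a*s^2*r₁^2 + 2*a*b*s*r₃^2 - 2*a*b*s*r₁*r₃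
            - 2*a*b*s*r*r₃ + 2*a*b*s*r*r₁ - a*b*c*r₃^2 + 2*a*b*c*r₁*r₃ - a*b*c*r₁^2
            + a*b^2*r₃^2 + a^2*b*r₃^2 - a^2*b*r₁*r₃) * h2s
      exact mul_left_cancel₀ (by positivity) h2
    rw [dist_eq_norm]
    exact malfatti_sqeq (norm_nonneg _) (by linarith) hsq
  · -- dist O₂ O₃
    have hv : (2 * s * r) • (O₂ - O₃) =
        (2 * s * r - r₂ * (a + c) - r₃ * b) • (B - A) + (-(2 * s * r) + r₂ * c + r₃ * (a + b)) • (C - A) := by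
      rw [hO₂, hO₃]
      match_scalars <;> field_simp <;> ring
    have hnv := malfatti_norm_comb_sq (B - A) (C - A) (2 * s * r - r₂ * (a + c) - r₃ * b) (-(2 * s * r) + r₂ * c + r₃ * (a + b))
      (c ^ 2) (b ^ 2) ((b ^ 2 + c ^ 2 - a ^ 2) / 2) hnBA hnCA ipA'
    have hsq : ‖O₂ - O₃‖ ^ 2 = (r₂ + r₃) ^ 2 := by
      have hkk : (2 * s * r) ^ 2 * ‖O₂ - O₃‖ ^ 2 = ‖(2 * s * r) • (O₂ - O₃)‖ ^ 2 := by
        simp only [norm_smul, mul_pow, Real.norm_eq_abs, sq_abs]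
      have h2 : (2 * s * r) ^ 2 * ‖O₂ - O₃‖ ^ 2 = (2 * s * r) ^ 2 * (r₂ + r₃) ^ 2 := by
        rw [hkk, hv, hnv]
        linear_combination (4*s^2*(a*r - r₂*(s-b) - r₃*(s-c) + 2*r*Real.sqrt (r₂*r₃))) * htan23
          + (16*s^2*r^2) * hK23sq + (-4*s*(r₂-r₃)^2) * hr2
          + (4*s^3*r₃^2 + 4*s^3*r₂^2 - 4*c*s^2*r₃^2 - 4*b*s^2*r₂^2 + 4*a*s^2*r₂*r₃
            - 4*a*s^2*r*r₃ - 4*a*s^2*r*r₂ - 2*a*c*s*r₂*r₃ + 2*a*c*s*r₂^2 + 2*a*c*s*r*r₃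
            - 2*a*c*s*r*r₂ - a*c^2*r₂*r₃ + a*c^2*r₂^2 + 2*a*b*s*r₃^2 - 2*a*b*s*r₂*r₃
            - 2*a*b*s*r*r₃ + 2*a*b*s*r*r₂ - a*b*c*r₃^2 + 2*a*b*c*r₂*r₃ - a*b*c*r₂^2
            + a*b^2*r₃^2 - a*b^2*r₂*r₃ + 2*a^2*s*r₂*r₃ - 2*a^2*s*r*r₃ - 2*a^2*s*r*r₂
            + a^2*c*r₂^2 + a^2*b*r₃^2 + a^3*r₂*r₃) * h2s
      exact mul_left_cancel₀ (by positivity) h2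
    rw [dist_eq_norm]
    exact malfatti_sqeq (norm_nonneg _) (by linarith) hsq
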